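/- arXiv:math/0607753 — 2 statements merged into one kernel-verified Lean document; each statement's English description precedes it below -/
import Mathlib

section
/- Let Z be a measure on S^{n-1} whose support is not contained in any closed hemisphere. If t : S^{n-1} → (0,∞) is continuous with ∫_{S^{n-1}} t dZ = 1, then the vector t° = ∫_{S^{n-1}} u t(u) dZ(u) lies in the interior of the convex hull of the support of Z. -/
open MeasureTheory

/-- The support of a measure on `ℝ^n`. -/
def msupp {n : ℕ} (Z : Measure (EuclideanSpace ℝ (Fin n))) :
    Set (EuclideanSpace ℝ (Fin n)) :=
  {x | ∀ r > (0 : ℝ), Z (Metric.ball x r) ≠ 0}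

open Metric Set Filter Topology

lemma msupp_isClosed {n : ℕ} (Z : Measure (EuclideanSpace ℝ (Fin n))) :
    IsClosed (msupp Z) := by
  rw [← isOpen_compl_iff, Metric.isOpen_iff]
  intro x hx
  have : ¬ ∀ r > (0:ℝ), Z (Metric.ball x r) ≠ 0 := hx
  push_neg at this
  obtain ⟨r, hr, hz⟩ := this
  refine ⟨r/2, by linarith, fun y hy => ?_⟩
  intro hmem
  exact hmem (r/2) (by linarith)
    (measure_mono_null (ball_subset_ball' (by
      have := mem_ball.1 hy; linarith)) hz)

lemma msupp_compl_null {n : ℕ} (Z : Measure (EuclideanSpace ℝ (Fin n))) :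
    Z (msupp Z)ᶜ = 0 := by
  apply measure_null_of_locally_null
  intro x hx
  have : ¬ ∀ r > (0:ℝ), Z (Metric.ball x r) ≠ 0 := hx
  push_neg at this
  obtain ⟨r, hr, hz⟩ := this
  exact ⟨Metric.ball x r, mem_nhdsWithin_of_mem_nhds (ball_mem_nhds x hr), hz⟩

lemma msupp_subset_sphere {n : ℕ} (Z : Measure (EuclideanSpace ℝ (Fin n)))
    (hsph : Z (Metric.sphere (0 : EuclideanSpace ℝ (Fin n)) 1)ᶜ = 0) :
    msupp Z ⊆ Metric.sphere (0 : EuclideanSpace ℝ (Fin n)) 1 := by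
  intro x hx
  by_contra hxs
  have hopen : IsOpen (Metric.sphere (0 : EuclideanSpace ℝ (Fin n)) 1)ᶜ :=
    (isClosed_sphere).isOpen_compl
  obtain ⟨r, hr, hball⟩ := Metric.isOpen_iff.1 hopen x hxs
  exact hx r hr (measure_mono_null hball hsph)

lemma integrable_of_continuous {n : ℕ} (Z : Measure (EuclideanSpace ℝ (Fin n)))
    [IsFiniteMeasure Z]
    (hsph : Z (Metric.sphere (0 : EuclideanSpace ℝ (Fin n)) 1)ᶜ = 0)
    {F : Type*} [NormedAddCommGroup F] (f : EuclideanSpace ℝ (Fin n) → F)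
    (hf : Continuous f) : Integrable f Z := by
  have haesph : ∀ᵐ u ∂Z, u ∈ Metric.sphere (0 : EuclideanSpace ℝ (Fin n)) 1 := by
    rw [MeasureTheory.ae_iff]
    exact hsph
  obtain ⟨C, hC⟩ := (isCompact_sphere (0 : EuclideanSpace ℝ (Fin n)) 1).exists_bound_of_continuousOn
    hf.continuousOn
  refine (integrable_const C).mono' hf.aestronglyMeasurable ?_
  filter_upwards [haesph] with u hu
  exact hC u hu

lemma convex_subset_closure_interior {E : Type*} [NormedAddCommGroup E] [NormedSpace ℝ E]
    {C : Set E} (hC : Convex ℝ C) (hne : (interior C).Nonempty) :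
    C ⊆ closure (interior C) := by
  obtain ⟨x0, hx0⟩ := hne
  intro a ha
  have hcont : Continuous (fun τ : ℝ => a + τ • (x0 - a)) :=
    continuous_const.add (continuous_id.smul continuous_const)
  have hφ : Tendsto (fun τ : ℝ => a + τ • (x0 - a)) (𝓝[>] (0:ℝ)) (𝓝 a) := by
    have h : Tendsto (fun τ : ℝ => a + τ • (x0 - a)) (𝓝 0) (𝓝 a) := by
      simpa using hcont.tendsto 0
    exact h.mono_left nhdsWithin_le_nhds
  refine mem_closure_of_tendsto hφ ?_
  filter_upwards [Ioc_mem_nhdsGT (zero_lt_one)] with τ hτ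
  have hcombo : (1 - τ) • a + τ • x0 ∈ interior C :=
    hC.combo_closure_interior_mem_interior (subset_closure ha) hx0
      (by linarith [hτ.2]) hτ.1 (by ring)
  have : a + τ • (x0 - a) = (1 - τ) • a + τ • x0 := by
    rw [smul_sub, sub_smul, one_smul]; abel
  rwa [this]

/-- Lemma 2: If the support of `Z` is not contained in a closed
hemisphere and `t > 0` is continuous with `∫ t dZ = 1`, then
`t° = ∫ t(u) u dZ(u)` lies in the interior of the convex hull of the support. -/
theorem vector_integral_mem_interior_hull (n : ℕ)
    (Z : Measure (EuclideanSpace ℝ (Fin n))) [IsFiniteMeasure Z]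
    (hsph : Z (Metric.sphere (0 : EuclideanSpace ℝ (Fin n)) 1)ᶜ = 0)
    (hhemi : ¬ ∃ v : EuclideanSpace ℝ (Fin n), ‖v‖ = 1 ∧
      msupp Z ⊆ {u | 0 ≤ (inner ℝ v u : ℝ)})
    (t : EuclideanSpace ℝ (Fin n) → ℝ) (htc : Continuous t) (htpos : ∀ u, 0 < t u)
    (htone : ∫ u, t u ∂Z = 1) :
    (∫ u, t u • u ∂Z) ∈ interior (convexHull ℝ (msupp Z)) := by
  classical
  set K : Set (EuclideanSpace ℝ (Fin n)) := msupp Z with hKdef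
  set x : EuclideanSpace ℝ (Fin n) := ∫ u, t u • u ∂Z with hxdef
  -- basic facts
  have haeK : ∀ᵐ u ∂Z, u ∈ K := by
    rw [MeasureTheory.ae_iff]
    exact msupp_compl_null Z
  have hKsph : K ⊆ Metric.sphere (0:EuclideanSpace ℝ (Fin n)) 1 := msupp_subset_sphere Z hsph
  have hKcomp : IsCompact K :=
    (isCompact_sphere (0:EuclideanSpace ℝ (Fin n)) 1).of_isClosed_subset (msupp_isClosed Z) hKsph
  -- K nonempty
  have hZne : Z ≠ 0 := by
    intro h
    rw [h] at htone
    simp at htone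
  have hKne : K.Nonempty := by
    by_contra h
    rw [Set.not_nonempty_iff_eq_empty] at h
    apply hZne
    have : Z Set.univ = 0 := by
      have := msupp_compl_null Z
      rwa [← hKdef, h, Set.compl_empty] at this
    exact Measure.measure_univ_eq_zero.1 this
  -- from hhemi : for every unit v there is u ∈ K with ⟪v,u⟫ < 0
  push_neg at hhemi
  have hneg : ∀ v : EuclideanSpace ℝ (Fin n), ‖v‖ = 1 → ∃ u ∈ K, (inner ℝ v u : ℝ) < 0 := by
    intro v hv
    obtain ⟨u, hu, hu'⟩ := Set.not_subset.1 (hhemi v hv)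
    exact ⟨u, hu, lt_of_not_ge hu'⟩
  -- integrability
  have hti : Integrable t Z := integrable_of_continuous Z hsph t htc
  have htui : Integrable (fun u => t u • u) Z :=
    integrable_of_continuous Z hsph _ (htc.smul continuous_id)
  -- Key: for every unit v, ⟪v, x⟫ < max_{u ∈ K} ⟪v, u⟫
  have hkey : ∀ v : EuclideanSpace ℝ (Fin n), ‖v‖ = 1 → ∃ w ∈ K, (inner ℝ v x : ℝ) < inner ℝ v w := by
    intro v hv
    have hinnercont : Continuous (fun u : EuclideanSpace ℝ (Fin n) => (inner ℝ v u : ℝ)) :=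
      continuous_const.inner continuous_id
    obtain ⟨w, hwK, hwmax⟩ := hKcomp.exists_isMaxOn hKne hinnercont.continuousOn
    set M : ℝ := inner ℝ v w with hMdef
    refine ⟨w, hwK, ?_⟩
    -- M > 0
    have hMpos : 0 < M := by
      obtain ⟨u0, hu0K, hu0⟩ := hneg (-v) (by simpa using hv)
      have : (0:ℝ) < inner ℝ v u0 := by
        rw [inner_neg_left] at hu0; linarith
      exact lt_of_lt_of_le this (hwmax hu0K)
    -- f u := t u * (M - ⟪v,u⟫)
    set f : EuclideanSpace ℝ (Fin n) → ℝ := fun u => t u * (M - inner ℝ v u) with hfdef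
    have hfc : Continuous f := htc.mul (continuous_const.sub hinnercont)
    have hfi : Integrable f Z := integrable_of_continuous Z hsph f hfc
    have hfnn : 0 ≤ᵐ[Z] f := by
      filter_upwards [haeK] with u hu
      have h1 : (inner ℝ v u : ℝ) ≤ M := hwmax hu
      have := (htpos u).le
      have : 0 ≤ M - (inner ℝ v u : ℝ) := by linarith
      exact mul_nonneg (htpos u).le this
    have hfpos : 0 < ∫ u, f u ∂Z := by
      rw [integral_pos_iff_support_of_nonneg_ae hfnn hfi]
      obtain ⟨u0, hu0K, hu0⟩ := hneg v hv
      have hfu0 : 0 < f u0 := mul_pos (htpos u0) (by linarith)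
      have hopen : IsOpen {u : EuclideanSpace ℝ (Fin n) | 0 < f u} := isOpen_lt continuous_const hfc
      obtain ⟨r, hr, hball⟩ := Metric.isOpen_iff.1 hopen u0 hfu0
      have hball' : Metric.ball u0 r ⊆ Function.support f := by
        intro y hy
        exact ne_of_gt (hball hy)
      have := hu0K r hr
      calc (0:ENNReal) < Z (Metric.ball u0 r) := pos_iff_ne_zero.2 this
        _ ≤ Z (Function.support f) := measure_mono hball'
    -- compute the integral of f
    have hMt : Integrable (fun u => M * t u) Z := hti.const_mul M
    have htv : Integrable (fun u => t u * (inner ℝ v u : ℝ)) Z :=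
      integrable_of_continuous Z hsph _ (htc.mul hinnercont)
    have hfsplit : ∫ u, f u ∂Z = M - ∫ u, t u * (inner ℝ v u : ℝ) ∂Z := by
      have : f = fun u => M * t u - t u * (inner ℝ v u : ℝ) := by
        funext u; simp only [hfdef]; ring
      rw [this, integral_sub hMt htv, integral_const_mul, htone, mul_one]
    have hinner : (inner ℝ v x : ℝ) = ∫ u, t u * (inner ℝ v u : ℝ) ∂Z := by
      rw [hxdef, ← integral_inner htui v]
      congr 1
      funext u
      rw [inner_smul_right]
    rw [hfsplit, hMdef] at hfpos
    rw [hinner]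
    linarith
  -- interior of convex hull is nonempty
  set C : Set (EuclideanSpace ℝ (Fin n)) := convexHull ℝ K with hCdef
  have hCconv : Convex ℝ C := convex_convexHull ℝ K
  have hCint : (interior C).Nonempty := by
    rw [hCdef, interior_convexHull_nonempty_iff_affineSpan_eq_top]
    by_contra h
    obtain ⟨x0, hx0K⟩ := id hKne
    -- K lies in a proper affine subspace; get a normal vector
    have hdir : (affineSpan ℝ K).direction ≠ ⊤ := by
      intro hd
      exact h ((AffineSubspace.direction_eq_top_iff_of_nonempty
        ((affineSpan_nonempty (k := ℝ)).2 hKne)).1 hd)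
    have horth : ((affineSpan ℝ K).direction)ᗮ ≠ ⊥ := by
      intro hb
      exact hdir (Submodule.orthogonal_eq_bot_iff.1 hb)
    obtain ⟨v, hvmem, hvne⟩ := Submodule.exists_mem_ne_zero_of_ne_bot horth
    set v1 : EuclideanSpace ℝ (Fin n) := ‖v‖⁻¹ • v with hv1def
    have hv1 : ‖v1‖ = 1 := norm_smul_inv_norm hvne
    have hconst : ∀ u ∈ K, (inner ℝ v1 u : ℝ) = inner ℝ v1 x0 := by
      intro u hu
      have hmem : u -ᵥ x0 ∈ (affineSpan ℝ K).direction :=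
        AffineSubspace.vsub_mem_direction (subset_affineSpan ℝ K hu)
          (subset_affineSpan ℝ K hx0K)
      have hv1mem : v1 ∈ ((affineSpan ℝ K).direction)ᗮ :=
        Submodule.smul_mem _ _ hvmem
      have := hv1mem (u -ᵥ x0) hmem
      have h2 : (inner ℝ v1 (u - x0) : ℝ) = 0 := by
        rw [real_inner_comm]
        simpa [vsub_eq_sub] using this
      rw [inner_sub_right] at h2
      linarith
    obtain ⟨u1, hu1K, hu1⟩ := hneg v1 hv1
    obtain ⟨u2, hu2K, hu2⟩ := hneg (-v1) (by simpa using hv1)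
    rw [inner_neg_left] at hu2
    have e1 := hconst u1 hu1K
    have e2 := hconst u2 hu2K
    linarith
  -- conclude by contradiction using Hahn-Banach separation
  by_contra hxint
  obtain ⟨g, hg⟩ := geometric_hahn_banach_open_point hCconv.interior isOpen_interior hxint
  have hgle : ∀ a ∈ C, g a ≤ g x := by
    intro a ha
    have hcl : a ∈ closure (interior C) := convex_subset_closure_interior hCconv hCint ha
    have hclosed : IsClosed {y : EuclideanSpace ℝ (Fin n) | g y ≤ g x} := isClosed_le g.continuous continuous_const
    have hsub : interior C ⊆ {y : EuclideanSpace ℝ (Fin n) | g y ≤ g x} := fun y hy => (hg y hy).le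
    exact (closure_minimal hsub hclosed) hcl
  -- turn g into a vector
  set v' : EuclideanSpace ℝ (Fin n) := (InnerProductSpace.toDual ℝ (EuclideanSpace ℝ (Fin n))).symm g with hv'def
  have hv'app : ∀ y : EuclideanSpace ℝ (Fin n), (inner ℝ v' y : ℝ) = g y := fun y =>
    InnerProductSpace.toDual_symm_apply
  have hv'ne : v' ≠ 0 := by
    intro h0
    obtain ⟨a0, ha0⟩ := hCint
    have := hg a0 ha0
    rw [← hv'app a0, ← hv'app x, h0] at this
    simp at this
  set v : EuclideanSpace ℝ (Fin n) := ‖v'‖⁻¹ • v' with hvdef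
  have hv : ‖v‖ = 1 := norm_smul_inv_norm hv'ne
  obtain ⟨w, hwK, hw⟩ := hkey v hv
  have hwC : w ∈ C := subset_convexHull ℝ K hwK
  have hle := hgle w hwC
  rw [← hv'app w, ← hv'app x] at hle
  have hnorm : (0:ℝ) < ‖v'‖⁻¹ := inv_pos.2 (norm_pos_iff.2 hv'ne)
  rw [hvdef] at hw
  rw [real_inner_smul_left, real_inner_smul_left] at hw
  nlinarith [hw, hle, hnorm]
end

section
/- Let Z be an isotropic measure on S^{n-1} with centroid at the origin (∫ u dZ(u) = 0). Define s : S^{n-1} → S^n ⊂ R^{n+1} by s(u) = (−(√n/√(n+1)) u, 1/√(n+1)), and define the measure Z̄ on S^n by ∫_{S^n} f dZ̄ = ((n+1)/n) ∫_{S^{n-1}} f∘s dZ. Then Z̄ is an isotropic measure on S^n: ∫_{S^n} |y·w|^2 dZ̄(w) = |y|^2 for all y ∈ R^{n+1}. -/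
open MeasureTheory
open scoped ENNReal

/-- The lift `Z̄` of an isotropic measure `Z` on `S^{n-1}` with centroid at
the origin, obtained by pushing `Z` forward under
`s(u) = (−(√n/√(n+1)) u, 1/√(n+1))` and rescaling by `(n+1)/n`, is an isotropic
measure on `S^n ⊂ ℝ^{n+1} = ℝ^n × ℝ`. -/
theorem lifted_measure_isotropic (n : ℕ) (hn : 0 < n)
    (Z : Measure (EuclideanSpace ℝ (Fin n))) [IsFiniteMeasure Z]
    (hsph : Z (Metric.sphere (0 : EuclideanSpace ℝ (Fin n)) 1)ᶜ = 0)
    (hiso : ∀ x : EuclideanSpace ℝ (Fin n),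
      ∫ u, (inner ℝ x u : ℝ) ^ 2 ∂Z = ‖x‖ ^ 2)
    (hcent : ∫ u, u ∂Z = (0 : EuclideanSpace ℝ (Fin n)))
    (s : EuclideanSpace ℝ (Fin n) → EuclideanSpace ℝ (Fin n) × ℝ)
    (hs : ∀ u, s u = (-(Real.sqrt n / Real.sqrt (n + 1)) • u, 1 / Real.sqrt (n + 1)))
    (Zbar : Measure (EuclideanSpace ℝ (Fin n) × ℝ))
    (hZbar : Zbar = (((n : ℝ≥0∞) + 1) / n) • Z.map s) :
    ∀ y : EuclideanSpace ℝ (Fin n) × ℝ,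
      ∫ w, ((inner ℝ y.1 w.1 : ℝ) + y.2 * w.2) ^ 2 ∂Zbar = ‖y.1‖ ^ 2 + y.2 ^ 2 := by
  intro y
  -- a.e. on sphere
  have hae : ∀ᵐ u ∂Z, ‖u‖ = 1 := by
    rw [ae_iff]
    convert hsph using 2
    ext u
    simp [mem_sphere_zero_iff_norm]
  -- integrability helper
  have hint_sq : ∀ x : EuclideanSpace ℝ (Fin n),
      Integrable (fun u => (inner ℝ x u : ℝ) ^ 2) Z := by
    intro x
    refine (integrable_const (‖x‖^2)).mono' ?_ ?_
    · exact (((innerSL ℝ x).continuous).pow 2).aestronglyMeasurable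
    · filter_upwards [hae] with u hu
      have := abs_real_inner_le_norm x u
      rw [Real.norm_eq_abs, abs_pow]
      calc |(inner ℝ x u : ℝ)| ^ 2 ≤ (‖x‖ * ‖u‖) ^ 2 := by
            apply pow_le_pow_left₀ (abs_nonneg _) this
        _ = ‖x‖ ^ 2 := by rw [hu]; ring
  have hint_lin : ∀ x : EuclideanSpace ℝ (Fin n),
      Integrable (fun u => (inner ℝ x u : ℝ)) Z := by
    intro x
    refine (integrable_const ‖x‖).mono' ((innerSL ℝ x).continuous.aestronglyMeasurable) ?_
    filter_upwards [hae] with u hu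
    rw [Real.norm_eq_abs]
    calc |(inner ℝ x u : ℝ)| ≤ ‖x‖ * ‖u‖ := abs_real_inner_le_norm x u
      _ = ‖x‖ := by rw [hu, mul_one]
  have hid : Integrable (fun u : EuclideanSpace ℝ (Fin n) => u) Z := by
    refine (integrable_const 1).mono' aestronglyMeasurable_id ?_
    filter_upwards [hae] with u hu
    simp [hu]
  -- centroid: ∫ ⟪x,u⟫ = 0
  have hlin0 : ∀ x : EuclideanSpace ℝ (Fin n), ∫ u, (inner ℝ x u : ℝ) ∂Z = 0 := by
    intro x
    have := (innerSL ℝ x).integral_comp_comm hid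
    simp only [innerSL_apply_apply] at this
    rw [this, hcent]
    simp
  -- total mass
  have hmass : ∫ _, (1:ℝ) ∂Z = (n : ℝ) := by
    have h1 : ∫ u, ‖u‖^2 ∂Z = (n : ℝ) := by
      have hsum : ∀ u : EuclideanSpace ℝ (Fin n),
          ‖u‖^2 = ∑ i, (inner ℝ (EuclideanSpace.single i (1:ℝ)) u : ℝ)^2 := by
        intro u
        rw [EuclideanSpace.norm_eq]
        rw [Real.sq_sqrt (by positivity)]
        congr 1
        ext i
        rw [EuclideanSpace.inner_single_left]
        simp [sq_abs]
      have : ∫ u, ‖u‖^2 ∂Z = ∑ i : Fin n, ∫ u, (inner ℝ (EuclideanSpace.single i (1:ℝ)) u : ℝ)^2 ∂Z := by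
        rw [← integral_finset_sum]
        · simp_rw [← hsum]
        · exact fun i _ => hint_sq _
      rw [this]
      have : ∀ i : Fin n, ∫ u, (inner ℝ (EuclideanSpace.single i (1:ℝ)) u : ℝ)^2 ∂Z = 1 := by
        intro i
        rw [hiso]
        rw [EuclideanSpace.norm_single]
        norm_num
      rw [Finset.sum_congr rfl (fun i _ => this i)]
      simp
    rw [← h1]
    apply integral_congr_ae
    filter_upwards [hae] with u hu
    simp [hu]
  -- now compute
  subst hZbar
  rw [integral_smul_measure]
  have hs_cont : Continuous s := by
    have : s = fun u => ((-(Real.sqrt n / Real.sqrt (n + 1))) • u, 1 / Real.sqrt (n + 1)) := funext hs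
    rw [this]
    fun_prop
  rw [integral_map hs_cont.measurable.aemeasurable]
  swap
  · exact (((Continuous.inner continuous_const continuous_fst).add
      (continuous_const.mul continuous_snd)).pow 2).aestronglyMeasurable
  set a : ℝ := -(Real.sqrt n / Real.sqrt (n + 1)) with ha
  set b : ℝ := 1 / Real.sqrt (n + 1) with hb
  have hint_eq : ∀ u, ((inner ℝ y.1 (s u).1 : ℝ) + y.2 * (s u).2) ^ 2
      = a^2 * (inner ℝ y.1 u : ℝ)^2 + (2*a*b*y.2) * (inner ℝ y.1 u : ℝ) + (y.2*b)^2 * 1 := by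
    intro u
    rw [hs]
    simp only [real_inner_smul_right]
    ring
  simp_rw [hint_eq]
  rw [integral_add, integral_add]
  · rw [integral_const_mul, integral_const_mul, integral_const_mul, hiso, hlin0, hmass]
    have hpos : (0:ℝ) < n := by exact_mod_cast hn
    have hpos1 : (0:ℝ) < n + 1 := by linarith
    have ha2 : a^2 = n / (n+1) := by
      rw [ha]
      rw [neg_pow, div_pow, Real.sq_sqrt hpos.le, Real.sq_sqrt hpos1.le]
      ring
    have hb2 : b^2 = 1 / (n+1) := by
      rw [hb, div_pow, Real.sq_sqrt hpos1.le]
      norm_num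
    have htr : ((((n : ℝ≥0∞) + 1) / n)).toReal = ((n:ℝ)+1)/n := by
      have h1 : ((n:ℝ≥0∞)+1) = ((n+1:ℕ):ℝ≥0∞) := by push_cast; ring
      rw [h1, ENNReal.toReal_div, ENNReal.toReal_natCast, ENNReal.toReal_natCast]
      push_cast; ring
    rw [htr, mul_pow, hb2, ha2]
    field_simp
    rw [smul_eq_mul]
    field_simp
    ring
  · exact (hint_sq _).const_mul _
  · exact (hint_lin _).const_mul _
  · exact ((hint_sq _).const_mul _).add ((hint_lin _).const_mul _)
  · exact integrable_const _
end
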